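/- For all integers n ≥ 0 and k ≥ 1, the poly-Bernoulli number of negative index satisfies B_n^{(-k)} = Σ_{l=1}^{k} (-1)^{l+k} · l! · S(k,l) · (l+1)^n, where S(k,l) denotes the Stirling number of the second kind. -/

import Mathlib

open Finset

/-- Stirling numbers of the second kind. -/
def S2 : ℕ → ℕ → ℕ
  | 0, 0 => 1
  | 0, _ + 1 => 0
  | _ + 1, 0 => 0
  | n + 1, k + 1 => S2 n k + (k + 1) * S2 n (k + 1)

/-- Unsigned Stirling numbers of the first kind. -/
def S1 : ℕ → ℕ → ℕ
  | 0, 0 => 1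
  | 0, _ + 1 => 0
  | _ + 1, 0 => 0
  | n + 1, k + 1 => S1 n k + n * S1 n (k + 1)

/-- Poly-Bernoulli number of negative index `B_n^{(-k)}` (closed power-sum formula). -/
def polyB (n k : ℕ) : ℤ :=
  ∑ l ∈ Finset.Icc 1 k, (-1 : ℤ) ^ (l + k) * (Nat.factorial l) * S2 k l * ((l : ℤ) + 1) ^ n

/-- Rising factorial `(r)_l = r (r+1) ⋯ (r+l-1)`. -/
def risingFact (r l : ℕ) : ℕ := ∏ i ∈ Finset.range l, (r + i)


lemma S2_succ (n k : ℕ) : S2 (n+1) (k+1) = S2 n k + (k+1) * S2 n (k+1) := rfl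
lemma S2_zero (n : ℕ) : S2 (n+1) 0 = 0 := rfl
lemma S2_eq_zero : ∀ {n m : ℕ}, n < m → S2 n m = 0
  | 0, m+1, _ => rfl
  | n+1, m+1, h => by
    rw [S2_succ, S2_eq_zero (by omega), S2_eq_zero (by omega)]; ring

lemma S2_one : ∀ n : ℕ, S2 (n+1) 1 = 1
  | 0 => rfl
  | n+1 => by rw [S2_succ, S2_zero, S2_one n]

lemma chooseId (c b : ℕ) :
    (c+2) * Nat.choose (c+1) b = (b+1) * Nat.choose (c+1) b + (c+1) * Nat.choose c b := by
  have h := Nat.add_one_mul_choose_eq (c+1) b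
  have h2 := Nat.add_one_mul_choose_eq c b
  rw [h, h2, Nat.choose_succ_succ (c+1) b]
  ring

lemma lemB (n j : ℕ) : (Nat.factorial j : ℤ) * S2 (n+1) (j+1)
    = ∑ b ∈ range (j+1), (-1:ℤ)^(j+b) * (j.choose b) * ((b:ℤ)+1)^n := by
  induction n generalizing j with
  | zero =>
    have h : ∑ b ∈ range (j+1), (-1:ℤ)^(j+b) * (j.choose b) * ((b:ℤ)+1)^0
        = (-1:ℤ)^j * ∑ b ∈ range (j+1), (-1:ℤ)^b * (j.choose b) := by
      rw [Finset.mul_sum]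
      exact Finset.sum_congr rfl fun b _ => by rw [pow_add]; ring
    rw [h, Int.alternating_sum_range_choose]
    cases j with
    | zero => simp [S2]
    | succ c =>
      have h2 : S2 1 (c+2) = 0 := S2_eq_zero (by omega)
      simp [h2]
  | succ n ih =>
    cases j with
    | zero =>
      have h : S2 (n+2) 1 = 1 := S2_one (n+1)
      simp [h]
    | succ c =>
      have h1 : (Nat.factorial (c+1) : ℤ) * S2 (n+2) (c+2)
          = ((c:ℤ)+1) * ((Nat.factorial c : ℤ) * S2 (n+1) (c+1))
            + ((c:ℤ)+2) * ((Nat.factorial (c+1) : ℤ) * S2 (n+1) (c+2)) := by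
        rw [S2_succ (n+1) (c+1)]
        push_cast [Nat.factorial_succ]
        ring
      rw [h1, ih c, ih (c+1)]
      have hext : ∑ b ∈ range (c+2), (-1:ℤ)^(c+b) * (c.choose b) * ((b:ℤ)+1)^n
          = ∑ b ∈ range (c+1), (-1:ℤ)^(c+b) * (c.choose b) * ((b:ℤ)+1)^n := by
        rw [Finset.sum_range_succ, Nat.choose_succ_self]
        simp
      rw [← hext, Finset.mul_sum, Finset.mul_sum, ← Finset.sum_add_distrib]
      refine Finset.sum_congr rfl fun b _ => ?_
      have hc : ((c:ℤ)+2) * ((c+1).choose b)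
          = ((b:ℤ)+1) * ((c+1).choose b) + ((c:ℤ)+1) * (c.choose b) := by
        exact_mod_cast congrArg (Nat.cast : ℕ → ℤ) (chooseId c b)
      have hs : (-1:ℤ)^(c+1+b) = -(-1:ℤ)^(c+b) := by
        rw [show c+1+b = (c+b)+1 by omega, pow_succ]; ring
      rw [hs, pow_succ]
      linear_combination (-(-1:ℤ)^(c+b)*((b:ℤ)+1)^n) * hc

lemma lemA (k b : ℕ) :
    (∑ j ∈ range (k+1), (-1:ℤ)^(j+b) * (j.choose b) * (Nat.factorial j) * S2 (k+1) (j+1))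
    = (-1:ℤ)^(k+b) * (Nat.factorial b) * S2 k b := by
  induction k generalizing b with
  | zero =>
    rw [Finset.sum_range_one]
    cases b with
    | zero => simp [S2]
    | succ c =>
      have h2 : S2 0 (c+1) = 0 := S2_eq_zero (by omega)
      simp [h2]
  | succ k ih =>
    have key : (∑ j ∈ range (k+2), (-1:ℤ)^(j+b) * (j.choose b) * (Nat.factorial j) * S2 (k+2) (j+1))
        = ∑ j ∈ range (k+1), (-1:ℤ)^(j+b) * ((j:ℤ)+1) * (Nat.factorial j) * (S2 (k+1) (j+1))
            * ((j.choose b : ℤ) - ((j+1).choose b : ℤ)) := by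
      have hsplit : ∀ j ∈ range (k+2),
          (-1:ℤ)^(j+b) * (j.choose b) * (Nat.factorial j) * S2 (k+2) (j+1)
          = ((-1:ℤ)^(j+b) * (j.choose b) * (Nat.factorial j) * S2 (k+1) j)
            + ((-1:ℤ)^(j+b) * (j.choose b) * ((j:ℤ)+1) * (Nat.factorial j) * S2 (k+1) (j+1)) := by
        intro j _
        rw [S2_succ (k+1) j]
        push_cast
        ring
      rw [Finset.sum_congr rfl hsplit, Finset.sum_add_distrib]
      rw [Finset.sum_range_succ' (fun j => (-1:ℤ)^(j+b) * (j.choose b) * (Nat.factorial j) * S2 (k+1) j) (k+1)]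
      rw [Finset.sum_range_succ (fun j => (-1:ℤ)^(j+b) * (j.choose b) * ((j:ℤ)+1) * (Nat.factorial j) * S2 (k+1) (j+1)) (k+1)]
      have hz1 : S2 (k+1) 0 = 0 := S2_zero k
      have hz2 : S2 (k+1) (k+2) = 0 := S2_eq_zero (by omega)
      rw [hz1, hz2]
      push_cast
      rw [mul_zero, mul_zero, add_zero, add_zero, ← Finset.sum_add_distrib]
      refine Finset.sum_congr rfl fun j _ => ?_
      have hs : (-1:ℤ)^(j+1+b) = -(-1:ℤ)^(j+b) := by
        rw [show j+1+b = (j+b)+1 by omega, pow_succ]; ring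
      rw [hs]
      push_cast [Nat.factorial_succ]
      ring
    rw [key]
    cases b with
    | zero =>
      have h0 : ∀ j ∈ range (k+1), (-1:ℤ)^(j+0) * ((j:ℤ)+1) * (Nat.factorial j) * (S2 (k+1) (j+1))
          * ((j.choose 0 : ℤ) - ((j+1).choose 0 : ℤ)) = 0 := by
        intro j _
        simp
      rw [Finset.sum_congr rfl h0, Finset.sum_const_zero, S2_zero]
      simp
    | succ c =>
      have hterm : ∀ j ∈ range (k+1),
          (-1:ℤ)^(j+(c+1)) * ((j:ℤ)+1) * (Nat.factorial j) * (S2 (k+1) (j+1))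
            * ((j.choose (c+1) : ℤ) - ((j+1).choose (c+1) : ℤ))
          = ((c:ℤ)+1) * ((-1:ℤ)^(j+c) * (j.choose c) * (Nat.factorial j) * S2 (k+1) (j+1))
            - ((c:ℤ)+1) * ((-1:ℤ)^(j+(c+1)) * (j.choose (c+1)) * (Nat.factorial j) * S2 (k+1) (j+1)) := by
        intro j _
        have hp : ((j+1).choose (c+1) : ℤ) = (j.choose c : ℤ) + (j.choose (c+1) : ℤ) := by
          exact_mod_cast congrArg (Nat.cast : ℕ → ℤ) (Nat.choose_succ_succ j c)
        have hn : (j+1) * j.choose c = (j.choose c + j.choose (c+1)) * (c+1) := by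
          rw [← Nat.choose_succ_succ]
          exact Nat.add_one_mul_choose_eq j c
        have hm : ((j:ℤ)+1) * (j.choose c) = ((j.choose c : ℤ) + (j.choose (c+1) : ℤ)) * ((c:ℤ)+1) := by
          exact_mod_cast hn
        have hs : (-1:ℤ)^(j+(c+1)) = -(-1:ℤ)^(j+c) := by
          rw [show j+(c+1) = (j+c)+1 by omega, pow_succ]; ring
        rw [hs]
        linear_combination ((-1:ℤ)^(j+c) * (Nat.factorial j) * (S2 (k+1) (j+1))) * hm
          + (((j:ℤ)+1) * ((-1:ℤ)^(j+c)) * (Nat.factorial j) * (S2 (k+1) (j+1))) * hp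
      rw [Finset.sum_congr rfl hterm, Finset.sum_sub_distrib, ← Finset.mul_sum, ← Finset.mul_sum,
          ih c, ih (c+1)]
      have hs2 : (-1:ℤ)^(k+(c+1)) = -(-1:ℤ)^(k+c) := by
        rw [show k+(c+1) = (k+c)+1 by omega, pow_succ]; ring
      have hs3 : (-1:ℤ)^(k+1+(c+1)) = (-1:ℤ)^(k+c) := by
        rw [show k+1+(c+1) = (k+c)+2 by omega, pow_add]; ring
      rw [hs2, hs3, S2_succ k c]
      push_cast [Nat.factorial_succ]
      ring

theorem stmt_0 (n k : ℕ) (hk : 1 ≤ k) :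
    (∑ j ∈ Finset.range (min n k + 1),
        ((Nat.factorial j : ℤ)) ^ 2 * S2 (n + 1) (j + 1) * S2 (k + 1) (j + 1)) =
      ∑ l ∈ Finset.Icc 1 k,
        (-1 : ℤ) ^ (l + k) * (Nat.factorial l) * S2 k l * ((l : ℤ) + 1) ^ n := by
  have h1 : (∑ j ∈ Finset.range (min n k + 1),
        ((Nat.factorial j : ℤ)) ^ 2 * S2 (n + 1) (j + 1) * S2 (k + 1) (j + 1))
      = ∑ j ∈ Finset.range (k + 1),
        ((Nat.factorial j : ℤ)) ^ 2 * S2 (n + 1) (j + 1) * S2 (k + 1) (j + 1) := by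
    apply Finset.sum_subset
    · intro x hx
      simp only [Finset.mem_range] at *
      omega
    · intro x hx hnx
      simp only [Finset.mem_range] at hx hnx
      have hx2 : n + 1 < x + 1 := by omega
      rw [S2_eq_zero hx2]
      simp
  rw [h1]
  have h2 : ∀ j ∈ range (k+1),
      ((Nat.factorial j : ℤ)) ^ 2 * S2 (n + 1) (j + 1) * S2 (k + 1) (j + 1)
      = ∑ b ∈ range (k+1), ((b:ℤ)+1)^n *
          ((-1:ℤ)^(j+b) * (j.choose b) * (Nat.factorial j) * S2 (k+1) (j+1)) := by
    intro j hj
    simp only [Finset.mem_range] at hj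
    have step1 : ((Nat.factorial j : ℤ)) ^ 2 * S2 (n + 1) (j + 1) * S2 (k + 1) (j + 1)
        = ((Nat.factorial j : ℤ) * S2 (n+1) (j+1)) * ((Nat.factorial j : ℤ) * S2 (k+1) (j+1)) := by
      ring
    rw [step1, lemB n j, Finset.sum_mul]
    have step2 : ∀ b ∈ range (j+1),
        (-1:ℤ)^(j+b) * (j.choose b) * ((b:ℤ)+1)^n * ((Nat.factorial j : ℤ) * S2 (k+1) (j+1))
        = ((b:ℤ)+1)^n * ((-1:ℤ)^(j+b) * (j.choose b) * (Nat.factorial j) * S2 (k+1) (j+1)) := by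
      intro b _; ring
    rw [Finset.sum_congr rfl step2]
    apply Finset.sum_subset
    · intro x hx
      simp only [Finset.mem_range] at *
      omega
    · intro x hx hnx
      simp only [Finset.mem_range] at hx hnx
      have : j.choose x = 0 := Nat.choose_eq_zero_of_lt (by omega)
      rw [this]
      simp
  rw [Finset.sum_congr rfl h2, Finset.sum_comm]
  have h3 : ∀ b ∈ range (k+1),
      (∑ j ∈ range (k+1), ((b:ℤ)+1)^n *
          ((-1:ℤ)^(j+b) * (j.choose b) * (Nat.factorial j) * S2 (k+1) (j+1)))
      = ((b:ℤ)+1)^n * ((-1:ℤ)^(k+b) * (Nat.factorial b) * S2 k b) := by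
    intro b _
    rw [← Finset.mul_sum, lemA k b]
  rw [Finset.sum_congr rfl h3]
  rw [Finset.sum_range_succ' (fun b => ((b:ℤ)+1)^n * ((-1:ℤ)^(k+b) * (Nat.factorial b) * S2 k b)) k]
  obtain ⟨k', rfl⟩ : ∃ k', k = k' + 1 := ⟨k - 1, by omega⟩
  rw [S2_zero k']
  rw [show Finset.Icc 1 (k'+1) = Finset.Ico 1 (k'+2) from by rw [← Finset.Ico_add_one_right_eq_Icc]; rfl,
      Finset.sum_Ico_eq_sum_range]
  simp only [Nat.cast_zero, Int.natCast_zero, mul_zero, zero_mul, add_zero]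
  refine Finset.sum_congr (by norm_num) fun i _ => ?_
  push_cast
  ring
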